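/- arXiv:2507.20372 — 5 statements merged into one kernel-verified Lean document; each statement's English description precedes it below -/
import Mathlib

section
/- Define a₀(t,r) = 2λ(t² - r² + λ²)/((t² + r² + λ²)(t² + (r + λ)²)) and a₁(t,r) = 4λtr/((t² + r² + λ²)(t² + (r + λ)²)). Then ∂ₜa₁ - ∂ᵣa₀ = 4λ²/(t² + r² + λ²)². -/
/-- The U(1) gauge field of the hyperbolic 1-vortex has field strength
`F₀₁ = ∂ₜa₁ - ∂ᵣa₀ = 4λ²/(t² + r² + λ²)²`. -/
theorem vortex_field_strength (lam : ℝ) (hlam : 0 < lam) (t r : ℝ) (hr : 0 < r) :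
    let a₀ : ℝ → ℝ → ℝ := fun t r =>
      2 * lam * (t ^ 2 - r ^ 2 + lam ^ 2) /
        ((t ^ 2 + r ^ 2 + lam ^ 2) * (t ^ 2 + (r + lam) ^ 2))
    let a₁ : ℝ → ℝ → ℝ := fun t r =>
      4 * lam * t * r / ((t ^ 2 + r ^ 2 + lam ^ 2) * (t ^ 2 + (r + lam) ^ 2))
    deriv (fun s => a₁ s r) t - deriv (fun s => a₀ t s) r =
      4 * lam ^ 2 / (t ^ 2 + r ^ 2 + lam ^ 2) ^ 2 := by
  intro a₀ a₁
  have hD1 : (0:ℝ) < t ^ 2 + r ^ 2 + lam ^ 2 := by positivity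
  have hD2 : (0:ℝ) < t ^ 2 + (r + lam) ^ 2 := by positivity
  have hden : (t ^ 2 + r ^ 2 + lam ^ 2) * (t ^ 2 + (r + lam) ^ 2) ≠ 0 := by positivity
  -- derivatives in t
  have P1 : HasDerivAt (fun s : ℝ => s ^ 2 + r ^ 2 + lam ^ 2) (2 * t) t := by
    simpa using (((hasDerivAt_pow 2 t).add_const (r ^ 2)).add_const (lam ^ 2))
  have P2 : HasDerivAt (fun s : ℝ => s ^ 2 + (r + lam) ^ 2) (2 * t) t := by
    simpa using ((hasDerivAt_pow 2 t).add_const ((r + lam) ^ 2))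
  have Pden : HasDerivAt (fun s : ℝ => (s ^ 2 + r ^ 2 + lam ^ 2) * (s ^ 2 + (r + lam) ^ 2))
      (2 * t * (t ^ 2 + (r + lam) ^ 2) + (t ^ 2 + r ^ 2 + lam ^ 2) * (2 * t)) t := P1.mul P2
  have Pnum : HasDerivAt (fun s : ℝ => 4 * lam * s * r) (4 * lam * r) t := by
    simpa using (((hasDerivAt_id t).const_mul (4 * lam)).mul_const r)
  have h1 : HasDerivAt (fun s => a₁ s r)
      ((4 * lam * r * ((t ^ 2 + r ^ 2 + lam ^ 2) * (t ^ 2 + (r + lam) ^ 2)) -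
        4 * lam * t * r * (2 * t * (t ^ 2 + (r + lam) ^ 2) + (t ^ 2 + r ^ 2 + lam ^ 2) * (2 * t))) /
        ((t ^ 2 + r ^ 2 + lam ^ 2) * (t ^ 2 + (r + lam) ^ 2)) ^ 2) t :=
    Pnum.div Pden hden
  -- derivatives in r
  have Q1 : HasDerivAt (fun s : ℝ => t ^ 2 + s ^ 2 + lam ^ 2) (2 * r) r := by
    simpa using (((hasDerivAt_pow 2 r).const_add (t ^ 2)).add_const (lam ^ 2))
  have Q2 : HasDerivAt (fun s : ℝ => t ^ 2 + (s + lam) ^ 2) (2 * (r + lam)) r := by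
    simpa using ((((hasDerivAt_id r).add_const lam).pow 2).const_add (t ^ 2))
  have Qden : HasDerivAt (fun s : ℝ => (t ^ 2 + s ^ 2 + lam ^ 2) * (t ^ 2 + (s + lam) ^ 2))
      (2 * r * (t ^ 2 + (r + lam) ^ 2) + (t ^ 2 + r ^ 2 + lam ^ 2) * (2 * (r + lam))) r := Q1.mul Q2
  have Qnum : HasDerivAt (fun s : ℝ => 2 * lam * (t ^ 2 - s ^ 2 + lam ^ 2))
      (2 * lam * (-(2 * r))) r := by
    have := (((hasDerivAt_pow 2 r).const_sub (t ^ 2)).add_const (lam ^ 2)).const_mul (2 * lam)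
    simpa using this
  have h0 : HasDerivAt (fun s => a₀ t s)
      ((2 * lam * (-(2 * r)) * ((t ^ 2 + r ^ 2 + lam ^ 2) * (t ^ 2 + (r + lam) ^ 2)) -
        2 * lam * (t ^ 2 - r ^ 2 + lam ^ 2) *
          (2 * r * (t ^ 2 + (r + lam) ^ 2) + (t ^ 2 + r ^ 2 + lam ^ 2) * (2 * (r + lam)))) /
        ((t ^ 2 + r ^ 2 + lam ^ 2) * (t ^ 2 + (r + lam) ^ 2)) ^ 2) r :=
    Qnum.div Qden hden
  rw [h1.deriv, h0.deriv]
  have hD1' : (t ^ 2 + r ^ 2 + lam ^ 2) ≠ 0 := ne_of_gt hD1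
  have hD2' : (t ^ 2 + (r + lam) ^ 2) ≠ 0 := ne_of_gt hD2
  field_simp
  ring
end

section
/- The hyperbolic 1-vortex fields φ₁ = (t² + r² - λ²)/(t² + r² + λ²), φ₂ = -2λt/(t² + r² + λ²), a₀ = 2λ(t² - r² + λ²)/((t² + r² + λ²)(t² + (r + λ)²)), a₁ = 4λtr/((t² + r² + λ²)(t² + (r + λ)²)) satisfy the vortex (Bogomolnyi) equations: ∂ₜa₁ - ∂ᵣa₀ = (1 - φ₁² - φ₂²)/r², ∂ₜφ₁ + a₀φ₂ = ∂ᵣφ₂ - a₁φ₁, and ∂ₜφ₂ - a₀φ₁ = -(∂ᵣφ₁ + a₁φ₂). -/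
/-- The hyperbolic 1-vortex fields satisfy the vortex (Bogomolnyi) equations on ℍ². -/
theorem vortex_bogomolnyi (lam : ℝ) (hlam : 0 < lam) (t r : ℝ) (hr : 0 < r) :
    let φ₁ : ℝ → ℝ → ℝ := fun t r =>
      (t ^ 2 + r ^ 2 - lam ^ 2) / (t ^ 2 + r ^ 2 + lam ^ 2)
    let φ₂ : ℝ → ℝ → ℝ := fun t r =>
      -(2 * lam * t) / (t ^ 2 + r ^ 2 + lam ^ 2)
    let a₀ : ℝ → ℝ → ℝ := fun t r =>
      2 * lam * (t ^ 2 - r ^ 2 + lam ^ 2) /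
        ((t ^ 2 + r ^ 2 + lam ^ 2) * (t ^ 2 + (r + lam) ^ 2))
    let a₁ : ℝ → ℝ → ℝ := fun t r =>
      4 * lam * t * r / ((t ^ 2 + r ^ 2 + lam ^ 2) * (t ^ 2 + (r + lam) ^ 2))
    (deriv (fun s => a₁ s r) t - deriv (fun s => a₀ t s) r =
      (1 - (φ₁ t r) ^ 2 - (φ₂ t r) ^ 2) / r ^ 2) ∧
    (deriv (fun s => φ₁ s r) t + a₀ t r * φ₂ t r =
      deriv (fun s => φ₂ t s) r - a₁ t r * φ₁ t r) ∧
    (deriv (fun s => φ₂ s r) t - a₀ t r * φ₁ t r =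
      -(deriv (fun s => φ₁ t s) r + a₁ t r * φ₂ t r)) := by
  intro φ₁ φ₂ a₀ a₁
  have hD : (0:ℝ) < t ^ 2 + r ^ 2 + lam ^ 2 := by positivity
  have hrl : (0:ℝ) < r + lam := by linarith
  have hE : (0:ℝ) < t ^ 2 + (r + lam) ^ 2 := by nlinarith [sq_nonneg t, pow_pos hrl 2]
  have hDE : (t ^ 2 + r ^ 2 + lam ^ 2) * (t ^ 2 + (r + lam) ^ 2) ≠ 0 :=
    ne_of_gt (mul_pos hD hE)
  have hDne : (t ^ 2 + r ^ 2 + lam ^ 2) ≠ 0 := ne_of_gt hD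
  have hEne : (t ^ 2 + (r + lam) ^ 2) ≠ 0 := ne_of_gt hE
  -- building blocks wrt t
  have hA : HasDerivAt (fun s : ℝ => s ^ 2 + r ^ 2 + lam ^ 2) (2 * t) t := by
    simpa [add_assoc] using (hasDerivAt_pow 2 t).add_const (r ^ 2 + lam ^ 2)
  have hB : HasDerivAt (fun s : ℝ => s ^ 2 + (r + lam) ^ 2) (2 * t) t := by
    simpa using (hasDerivAt_pow 2 t).add_const ((r + lam) ^ 2)
  have hQ : HasDerivAt (fun s : ℝ => (s ^ 2 + r ^ 2 + lam ^ 2) * (s ^ 2 + (r + lam) ^ 2))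
      (2 * t * (t ^ 2 + (r + lam) ^ 2) + (t ^ 2 + r ^ 2 + lam ^ 2) * (2 * t)) t := hA.mul hB
  -- building blocks wrt r
  have hA' : HasDerivAt (fun s : ℝ => t ^ 2 + s ^ 2 + lam ^ 2) (2 * r) r := by
    have h := ((hasDerivAt_pow 2 r).const_add (t ^ 2)).add_const (lam ^ 2)
    simpa [add_assoc] using h
  have hB' : HasDerivAt (fun s : ℝ => t ^ 2 + (s + lam) ^ 2) (2 * (r + lam)) r := by
    have h := ((((hasDerivAt_id r).add_const lam).pow 2)).const_add (t ^ 2)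
    simpa [mul_comm] using h
  have hQ' : HasDerivAt (fun s : ℝ => (t ^ 2 + s ^ 2 + lam ^ 2) * (t ^ 2 + (s + lam) ^ 2))
      (2 * r * (t ^ 2 + (r + lam) ^ 2) + (t ^ 2 + r ^ 2 + lam ^ 2) * (2 * (r + lam))) r :=
    hA'.mul hB'
  -- numerators
  have hN1 : HasDerivAt (fun s : ℝ => 4 * lam * s * r) (4 * lam * r) t := by
    simpa using (((hasDerivAt_id t).const_mul (4 * lam)).mul_const r)
  have hN2 : HasDerivAt (fun s : ℝ => s ^ 2 + r ^ 2 - lam ^ 2) (2 * t) t := by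
    simpa [add_assoc, sub_eq_add_neg] using (hasDerivAt_pow 2 t).add_const (r ^ 2 - lam ^ 2)
  have hN3 : HasDerivAt (fun s : ℝ => -(2 * lam * s)) (-(2 * lam)) t := by
    simpa using ((hasDerivAt_id t).const_mul (2 * lam)).fun_neg
  have hN4 : HasDerivAt (fun s : ℝ => 2 * lam * (t ^ 2 - s ^ 2 + lam ^ 2))
      (2 * lam * (-(2 * r))) r := by
    have h : HasDerivAt (fun s : ℝ => t ^ 2 - s ^ 2 + lam ^ 2) (-(2 * r)) r := by
      have := (((hasDerivAt_pow 2 r).neg).const_add (t ^ 2)).add_const (lam ^ 2)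
      simpa [sub_eq_add_neg, add_assoc] using this
    simpa using h.const_mul (2 * lam)
  have hN5 : HasDerivAt (fun s : ℝ => t ^ 2 + s ^ 2 - lam ^ 2) (2 * r) r := by
    have := ((hasDerivAt_pow 2 r).const_add (t ^ 2)).add_const (-lam ^ 2)
    simpa [add_assoc, sub_eq_add_neg] using this
  -- the six derivatives
  have d1 := (hN1.div hQ hDE).deriv
  have d2 := (hN4.div hQ' hDE).deriv
  have d3 := (hN2.div hA hDne).deriv
  have d4 : deriv (fun s : ℝ => -(2 * lam * t) / (t ^ 2 + s ^ 2 + lam ^ 2))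
      = deriv (fun s : ℝ => -(2 * lam * t) / (t ^ 2 + s ^ 2 + lam ^ 2)) := rfl
  have hc : HasDerivAt (fun s : ℝ => -(2 * lam * t)) 0 r := hasDerivAt_const r _
  have d4' := (hc.div hA' hDne).deriv
  have d5 := (hN3.div hA hDne).deriv
  have d6 := (hN5.div hA' hDne).deriv
  simp only [Pi.div_def] at d1 d2 d3 d4' d5 d6
  simp only [φ₁, φ₂, a₀, a₁]
  refine ⟨?_, ?_, ?_⟩
  · rw [d1, d2, div_sub_div_same, div_eq_div_iff (by positivity) (by positivity)]
    field_simp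
    ring
  · rw [d3, d4', div_mul_div_comm, div_mul_div_comm,
      div_add_div _ _ (by positivity) (by positivity),
      div_sub_div _ _ (by positivity) (by positivity),
      div_eq_div_iff (by positivity) (by positivity)]
    ring
  · rw [d5, d6, div_mul_div_comm, div_mul_div_comm,
      div_sub_div _ _ (by positivity) (by positivity),
      div_add_div _ _ (by positivity) (by positivity), ← neg_div,
      div_eq_div_iff (by positivity) (by positivity)]
    ring
end

section
/- The integral ∫₋∞^∞ ∫₀^∞ 4λ²/(t² + r² + λ²)² dr dt equals 2π, for any λ > 0. Hence the vortex number N_v = (1/2π)∫∫ F₀₁ dt dr of the hyperbolic 1-vortex equals 1. -/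
open MeasureTheory Set Filter Topology

private lemma inner_eval (lam t : ℝ) (hlam : 0 < lam) :
    (∫ r in Set.Ioi (0 : ℝ), 4 * lam ^ 2 / (t ^ 2 + r ^ 2 + lam ^ 2) ^ 2)
      = Real.pi * lam ^ 2 / ((t ^ 2 + lam ^ 2) * Real.sqrt (t ^ 2 + lam ^ 2)) := by
  set b : ℝ := t ^ 2 + lam ^ 2 with hbdef
  have hb : 0 < b := by positivity
  set s : ℝ := Real.sqrt b with hsdef
  have hs : 0 < s := Real.sqrt_pos.mpr hb
  have hs2 : s ^ 2 = b := Real.sq_sqrt hb.le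
  have hcongr : ∀ r : ℝ, t ^ 2 + r ^ 2 + lam ^ 2 = r ^ 2 + b := fun r => by rw [hbdef]; ring
  simp only [hcongr]
  set g : ℝ → ℝ := fun r =>
    (2 * lam ^ 2 / b) * (r / (r ^ 2 + b)) + (2 * lam ^ 2 / (b * s)) * Real.arctan (r / s)
  have hderiv : ∀ r ∈ Set.Ici (0 : ℝ), HasDerivAt g (4 * lam ^ 2 / (r ^ 2 + b) ^ 2) r := by
    intro r _
    have hrb : (r ^ 2 + b) ≠ 0 := by positivity
    have h1 : HasDerivAt (fun r : ℝ => r / (r ^ 2 + b)) ((b - r ^ 2) / (r ^ 2 + b) ^ 2) r := by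
      have := (hasDerivAt_id r).div ((hasDerivAt_pow 2 r).add_const b) hrb
      refine this.congr_deriv ?_
      simp only [id]
      field_simp
      ring
    have h2 : HasDerivAt (fun r : ℝ => Real.arctan (r / s)) (s / (r ^ 2 + b)) r := by
      have := (Real.hasDerivAt_arctan (r / s)).comp r ((hasDerivAt_id r).div_const s)
      refine this.congr_deriv ?_
      rw [← hs2]
      field_simp
      ring
    have := (h1.const_mul (2 * lam ^ 2 / b)).add (h2.const_mul (2 * lam ^ 2 / (b * s)))
    refine this.congr_deriv ?_
    field_simp
    ring
  have hpos : ∀ r ∈ Set.Ioi (0 : ℝ), 0 ≤ 4 * lam ^ 2 / (r ^ 2 + b) ^ 2 := fun r _ => by positivity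
  have T1 : Tendsto (fun r : ℝ => r / (r ^ 2 + b)) atTop (𝓝 0) := by
    apply tendsto_of_tendsto_of_tendsto_of_le_of_le' tendsto_const_nhds tendsto_inv_atTop_zero
    · filter_upwards [eventually_gt_atTop (0 : ℝ)] with r hr
      positivity
    · filter_upwards [eventually_gt_atTop (0 : ℝ)] with r hr
      calc r / (r ^ 2 + b) ≤ r / r ^ 2 :=
            div_le_div_of_nonneg_left hr.le (by positivity) (by nlinarith)
        _ = r⁻¹ := by rw [sq]; field_simp
  have T2 : Tendsto (fun r : ℝ => Real.arctan (r / s)) atTop (𝓝 (Real.pi / 2)) :=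
    (Real.tendsto_arctan_atTop.mono_right nhdsWithin_le_nhds).comp
      (tendsto_id.atTop_div_const hs)
  have Tg : Tendsto g atTop (𝓝 (Real.pi * lam ^ 2 / (b * s))) := by
    have := ((T1.const_mul (2 * lam ^ 2 / b)).add (T2.const_mul (2 * lam ^ 2 / (b * s))))
    convert this using 2
    field_simp
    ring
  have := MeasureTheory.integral_Ioi_of_hasDerivAt_of_nonneg
    ((hderiv 0 Set.self_mem_Ici).continuousAt.continuousWithinAt)
    (fun r hr => hderiv r (Set.mem_Ici.mpr (le_of_lt hr))) hpos Tg
  rw [this]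
  simp [g]

private lemma outer_eval (lam : ℝ) (hlam : 0 < lam) :
    (∫ t in Set.Ioi (0 : ℝ),
        Real.pi * lam ^ 2 / ((t ^ 2 + lam ^ 2) * Real.sqrt (t ^ 2 + lam ^ 2))) = Real.pi := by
  set G : ℝ → ℝ := fun t => Real.pi * (t / Real.sqrt (t ^ 2 + lam ^ 2))
  have hderiv : ∀ t ∈ Set.Ici (0 : ℝ), HasDerivAt G
      (Real.pi * lam ^ 2 / ((t ^ 2 + lam ^ 2) * Real.sqrt (t ^ 2 + lam ^ 2))) t := by
    intro t _
    have hb : (0:ℝ) < t ^ 2 + lam ^ 2 := by positivity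
    have hs : 0 < Real.sqrt (t ^ 2 + lam ^ 2) := Real.sqrt_pos.mpr hb
    have hs2 : Real.sqrt (t ^ 2 + lam ^ 2) ^ 2 = t ^ 2 + lam ^ 2 := Real.sq_sqrt hb.le
    have hsq : HasDerivAt (fun t : ℝ => Real.sqrt (t ^ 2 + lam ^ 2))
        (t / Real.sqrt (t ^ 2 + lam ^ 2)) t := by
      have := (Real.hasDerivAt_sqrt hb.ne').comp t ((hasDerivAt_pow 2 t).add_const (lam ^ 2))
      refine this.congr_deriv ?_
      field_simp
      ring
    have := ((hasDerivAt_id t).div hsq hs.ne').const_mul Real.pi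
    refine this.congr_deriv ?_
    have hl : lam ^ 2 = Real.sqrt (t ^ 2 + lam ^ 2) ^ 2 - t ^ 2 := by rw [hs2]; ring
    rw [hl, show t ^ 2 + (Real.sqrt (t ^ 2 + lam ^ 2) ^ 2 - t ^ 2)
        = Real.sqrt (t ^ 2 + lam ^ 2) ^ 2 by ring]
    simp only [id, Real.sqrt_sq hs.le]
    field_simp
  have hpos : ∀ t ∈ Set.Ioi (0 : ℝ),
      0 ≤ Real.pi * lam ^ 2 / ((t ^ 2 + lam ^ 2) * Real.sqrt (t ^ 2 + lam ^ 2)) := by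
    intro t _
    have := Real.pi_pos
    positivity
  have T : Tendsto (fun t : ℝ => t / Real.sqrt (t ^ 2 + lam ^ 2)) atTop (𝓝 1) := by
    have h0 : Tendsto (fun t : ℝ => t ^ 2 + lam ^ 2) atTop atTop :=
      tendsto_atTop_add_const_right atTop (lam ^ 2) (tendsto_pow_atTop two_ne_zero)
    have h1 : Tendsto (fun t : ℝ => lam ^ 2 / (t ^ 2 + lam ^ 2)) atTop (𝓝 0) :=
      Tendsto.div_atTop tendsto_const_nhds h0
    have h2 : Tendsto (fun t : ℝ => Real.sqrt (1 - lam ^ 2 / (t ^ 2 + lam ^ 2))) atTop (𝓝 1) := by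
      have := (tendsto_const_nhds.sub h1).sqrt (x := (1:ℝ) - 0)
      simpa using this
    apply h2.congr'
    filter_upwards [eventually_gt_atTop (0 : ℝ)] with t ht
    have hb : (0:ℝ) < t ^ 2 + lam ^ 2 := by positivity
    rw [show 1 - lam ^ 2 / (t ^ 2 + lam ^ 2) = t ^ 2 / (t ^ 2 + lam ^ 2) by field_simp; ring,
      Real.sqrt_div (sq_nonneg t), Real.sqrt_sq ht.le]
  have TG : Tendsto G atTop (𝓝 Real.pi) := by
    have := T.const_mul Real.pi
    simpa using this
  have := MeasureTheory.integral_Ioi_of_hasDerivAt_of_nonneg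
    ((hderiv 0 Set.self_mem_Ici).continuousAt.continuousWithinAt)
    (fun t ht => hderiv t (Set.mem_Ici.mpr (le_of_lt ht))) hpos TG
  rw [this]
  simp [G]

/-- The total flux of the hyperbolic 1-vortex field strength over the half plane is `2π`,
so the vortex number `N_v = (1/2π)∫∫ F₀₁` equals `1`. -/
theorem vortex_number_one (lam : ℝ) (hlam : 0 < lam) :
    (∫ t : ℝ, ∫ r in Set.Ioi (0 : ℝ),
        4 * lam ^ 2 / (t ^ 2 + r ^ 2 + lam ^ 2) ^ 2) = 2 * Real.pi ∧
    (1 / (2 * Real.pi)) *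
      (∫ t : ℝ, ∫ r in Set.Ioi (0 : ℝ),
        4 * lam ^ 2 / (t ^ 2 + r ^ 2 + lam ^ 2) ^ 2) = 1 := by
  have key : (∫ t : ℝ, ∫ r in Set.Ioi (0 : ℝ),
      4 * lam ^ 2 / (t ^ 2 + r ^ 2 + lam ^ 2) ^ 2) = 2 * Real.pi := by
    have h1 : ∀ t : ℝ, (∫ r in Set.Ioi (0 : ℝ), 4 * lam ^ 2 / (t ^ 2 + r ^ 2 + lam ^ 2) ^ 2)
        = Real.pi * lam ^ 2 / ((t ^ 2 + lam ^ 2) * Real.sqrt (t ^ 2 + lam ^ 2)) :=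
      fun t => inner_eval lam t hlam
    simp only [h1]
    have habs := _root_.integral_comp_abs
      (f := fun x : ℝ => Real.pi * lam ^ 2 / ((x ^ 2 + lam ^ 2) * Real.sqrt (x ^ 2 + lam ^ 2)))
    simp only [sq_abs] at habs
    rw [habs, outer_eval lam hlam, mul_comm]
  refine ⟨key, ?_⟩
  rw [key]
  field_simp
end

section
/- Let f : D → ℂ be holomorphic on the open unit disk D and let ρ(w) = -log(½(1 - |f(w)|²)) + ½ log|f'(w)|², defined where |f(w)| < 1 and f'(w) ≠ 0. Then ρ satisfies the Liouville equation Δρ = e^{2ρ}, where Δ = 4∂_w∂_{w̄} is the standard Laplacian. -/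
open Complex

private lemma hasDerivAt_re_comp {q : ℝ → ℂ} {q' : ℂ} {t : ℝ} (hq : HasDerivAt q q' t) :
    HasDerivAt (fun s => (q s).re) q'.re t :=
  Complex.reCLM.hasFDerivAt.comp_hasDerivAt t hq

private lemma hasDerivAt_im_comp {q : ℝ → ℂ} {q' : ℂ} {t : ℝ} (hq : HasDerivAt q q' t) :
    HasDerivAt (fun s => (q s).im) q'.im t :=
  Complex.imCLM.hasFDerivAt.comp_hasDerivAt t hq

private lemma hasDerivAt_dot {q r : ℝ → ℂ} {q' r' : ℂ} {t : ℝ}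
    (hq : HasDerivAt q q' t) (hr : HasDerivAt r r' t) :
    HasDerivAt (fun s => (q s).re * (r s).re + (q s).im * (r s).im)
      (q'.re * (r t).re + (q t).re * r'.re + (q'.im * (r t).im + (q t).im * r'.im)) t :=
  ((hasDerivAt_re_comp hq).mul (hasDerivAt_re_comp hr)).add
    ((hasDerivAt_im_comp hq).mul (hasDerivAt_im_comp hr))

private lemma hasDerivAt_normSq_comp {q : ℝ → ℂ} {q' : ℂ} {t : ℝ} (hq : HasDerivAt q q' t) :
    HasDerivAt (fun s => Complex.normSq (q s))
      (2 * ((q t).re * q'.re + (q t).im * q'.im)) t := by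
  have h := hasDerivAt_dot hq hq
  simp only [Complex.normSq_apply]
  convert h using 1
  ring

private lemma line_second
    (f f1 f2 f3 : ℂ → ℂ) (U : Set ℂ) (hU : IsOpen U)
    (hd0 : ∀ z ∈ U, HasDerivAt f (f1 z) z)
    (hd1 : ∀ z ∈ U, HasDerivAt f1 (f2 z) z)
    (hd2 : ∀ z ∈ U, HasDerivAt f2 (f3 z) z)
    (hA : ∀ z ∈ U, Complex.normSq (f z) < 1)
    (hB : ∀ z ∈ U, f1 z ≠ 0)
    (L : ℝ → ℂ) (d : ℂ) (hL : ∀ t, HasDerivAt L d t)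
    (t₀ : ℝ) (ht : L t₀ ∈ U) :
    iteratedDeriv 2 (fun t => -Real.log ((1 - Complex.normSq (f (L t))) / 2)
        + (1/2) * Real.log (Complex.normSq (f1 (L t)))) t₀ =
      ((2 * Complex.normSq (d * f1 (L t₀))
          + 2 * ((f (L t₀)).re * (d^2 * f2 (L t₀)).re + (f (L t₀)).im * (d^2 * f2 (L t₀)).im))
          * (1 - Complex.normSq (f (L t₀)))
        + (2 * ((f (L t₀)).re * (d * f1 (L t₀)).re + (f (L t₀)).im * (d * f1 (L t₀)).im))^2)
        / (1 - Complex.normSq (f (L t₀)))^2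
      + (1/2) * (((2 * Complex.normSq (d * f2 (L t₀))
          + 2 * ((f1 (L t₀)).re * (d^2 * f3 (L t₀)).re + (f1 (L t₀)).im * (d^2 * f3 (L t₀)).im))
          * Complex.normSq (f1 (L t₀))
        - (2 * ((f1 (L t₀)).re * (d * f2 (L t₀)).re + (f1 (L t₀)).im * (d * f2 (L t₀)).im))^2)
        / Complex.normSq (f1 (L t₀))^2) := by
  -- abbreviations
  set h : ℝ → ℝ := fun t => -Real.log ((1 - Complex.normSq (f (L t))) / 2)
      + (1/2) * Real.log (Complex.normSq (f1 (L t))) with hh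
  set P : ℝ → ℝ := fun t =>
    2 * ((f (L t)).re * (d * f1 (L t)).re + (f (L t)).im * (d * f1 (L t)).im) with hP
  set Q : ℝ → ℝ := fun t =>
    2 * ((f1 (L t)).re * (d * f2 (L t)).re + (f1 (L t)).im * (d * f2 (L t)).im) with hQ
  set D : ℝ → ℝ := fun t =>
    P t / (1 - Complex.normSq (f (L t))) + (1/2) * (Q t / Complex.normSq (f1 (L t))) with hD
  -- basic chain rules at any point of the line inside U
  have hq : ∀ t, L t ∈ U → HasDerivAt (fun s => f (L s)) (d * f1 (L t)) t := by
    intro t m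
    have := HasDerivAt.scomp (𝕜 := ℝ) t (hd0 _ m) (hL t)
    simpa [Function.comp_def, smul_eq_mul] using this
  have hq1 : ∀ t, L t ∈ U → HasDerivAt (fun s => f1 (L s)) (d * f2 (L t)) t := by
    intro t m
    have := HasDerivAt.scomp (𝕜 := ℝ) t (hd1 _ m) (hL t)
    simpa [Function.comp_def, smul_eq_mul] using this
  have hq2 : ∀ t, L t ∈ U → HasDerivAt (fun s => f2 (L s)) (d * f3 (L t)) t := by
    intro t m
    have := HasDerivAt.scomp (𝕜 := ℝ) t (hd2 _ m) (hL t)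
    simpa [Function.comp_def, smul_eq_mul] using this
  have hN1 : ∀ t, L t ∈ U → HasDerivAt (fun s => Complex.normSq (f (L s))) (P t) t := by
    intro t m
    have := hasDerivAt_normSq_comp (hq t m)
    simpa [hP] using this
  have hN2 : ∀ t, L t ∈ U → HasDerivAt (fun s => Complex.normSq (f1 (L s))) (Q t) t := by
    intro t m
    have := hasDerivAt_normSq_comp (hq1 t m)
    simpa [hQ] using this
  have hApos : ∀ t, L t ∈ U → 0 < 1 - Complex.normSq (f (L t)) := by
    intro t m; linarith [hA _ m]
  have hBpos : ∀ t, L t ∈ U → 0 < Complex.normSq (f1 (L t)) := by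
    intro t m; exact Complex.normSq_pos.2 (hB _ m)
  -- first derivative of h
  have hder : ∀ t, L t ∈ U → HasDerivAt h (D t) t := by
    intro t m
    have hne1 : (1 - Complex.normSq (f (L t))) / 2 ≠ 0 := by
      have := hApos t m; positivity
    have hne2 : Complex.normSq (f1 (L t)) ≠ 0 := ne_of_gt (hBpos t m)
    have h1 : HasDerivAt (fun s => (1 - Complex.normSq (f (L s))) / 2) (-(P t) / 2) t := by
      have := ((hN1 t m).const_sub 1).div_const 2
      simpa [neg_div] using this
    have h2 : HasDerivAt (fun s => -Real.log ((1 - Complex.normSq (f (L s))) / 2))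
        (-((-(P t) / 2) / ((1 - Complex.normSq (f (L t))) / 2))) t := (h1.log hne1).neg
    have h3 : HasDerivAt (fun s => (1/2 : ℝ) * Real.log (Complex.normSq (f1 (L s))))
        ((1/2) * (Q t / Complex.normSq (f1 (L t)))) t :=
      ((hN2 t m).log hne2).const_mul _
    have h4 := h2.add h3
    have : -((-(P t) / 2) / ((1 - Complex.normSq (f (L t))) / 2))
        + (1/2) * (Q t / Complex.normSq (f1 (L t))) = D t := by
      rw [hD]
      have h5 := hApos t m
      field_simp
    rw [this] at h4
    exact h4
  -- eventually on the line we stay in U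
  have hV : ∀ᶠ t in nhds t₀, L t ∈ U := (hL t₀).continuousAt (hU.mem_nhds ht)
  have hEq : (deriv h) =ᶠ[nhds t₀] D := hV.mono fun t m => (hder t m).deriv
  -- second derivative
  have key : iteratedDeriv 2 h t₀ = deriv D t₀ := by
    rw [show (2 : ℕ) = 1 + 1 from rfl, iteratedDeriv_succ, iteratedDeriv_one]
    exact hEq.deriv_eq
  rw [key]
  -- now differentiate D at t₀
  have m := ht
  have hq' : HasDerivAt (fun s => d * f1 (L s)) (d^2 * f2 (L t₀)) t₀ := by
    have := (hq1 t₀ m).const_mul d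
    exact this.congr_deriv (by ring)
  have hq1' : HasDerivAt (fun s => d * f2 (L s)) (d^2 * f3 (L t₀)) t₀ := by
    have := (hq2 t₀ m).const_mul d
    exact this.congr_deriv (by ring)
  have hPd : HasDerivAt P
      (2 * (Complex.normSq (d * f1 (L t₀))
        + ((f (L t₀)).re * (d^2 * f2 (L t₀)).re + (f (L t₀)).im * (d^2 * f2 (L t₀)).im))) t₀ := by
    have := (hasDerivAt_dot (hq t₀ m) hq').const_mul (2 : ℝ)
    refine this.congr_deriv ?_
    simp [Complex.normSq_apply]
    ring
  have hQd : HasDerivAt Q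
      (2 * (Complex.normSq (d * f2 (L t₀))
        + ((f1 (L t₀)).re * (d^2 * f3 (L t₀)).re + (f1 (L t₀)).im * (d^2 * f3 (L t₀)).im))) t₀ := by
    have := (hasDerivAt_dot (hq1 t₀ m) hq1').const_mul (2 : ℝ)
    refine this.congr_deriv ?_
    simp [Complex.normSq_apply]
    ring
  have hden1 : HasDerivAt (fun s => 1 - Complex.normSq (f (L s))) (-(P t₀)) t₀ :=
    (hN1 t₀ m).const_sub 1
  have hne1 : 1 - Complex.normSq (f (L t₀)) ≠ 0 := ne_of_gt (hApos t₀ m)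
  have hne2 : Complex.normSq (f1 (L t₀)) ≠ 0 := ne_of_gt (hBpos t₀ m)
  have hD1 : HasDerivAt (fun s => P s / (1 - Complex.normSq (f (L s))))
      ((2 * (Complex.normSq (d * f1 (L t₀))
        + ((f (L t₀)).re * (d^2 * f2 (L t₀)).re + (f (L t₀)).im * (d^2 * f2 (L t₀)).im))
        * (1 - Complex.normSq (f (L t₀))) - P t₀ * (-(P t₀)))
        / (1 - Complex.normSq (f (L t₀)))^2) t₀ :=
    hPd.div hden1 hne1
  have hD2 : HasDerivAt (fun s => (1/2 : ℝ) * (Q s / Complex.normSq (f1 (L s))))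
      ((1/2) * ((2 * (Complex.normSq (d * f2 (L t₀))
        + ((f1 (L t₀)).re * (d^2 * f3 (L t₀)).re + (f1 (L t₀)).im * (d^2 * f3 (L t₀)).im))
        * Complex.normSq (f1 (L t₀)) - Q t₀ * Q t₀)
        / Complex.normSq (f1 (L t₀))^2)) t₀ :=
    (hQd.div (hN2 t₀ m) hne2).const_mul _
  have hDfull := hD1.add hD2
  rw [show deriv D t₀ = _ from hDfull.deriv]
  rw [hP, hQ]
  ring

/-- For `f` holomorphic on the unit disk, the function
`ρ(w) = -log(½(1 - |f(w)|²)) + ½ log|f'(w)|²` satisfies the Liouville equation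
`Δρ = e^{2ρ}` (with `Δ = ∂ₓ² + ∂ᵧ² = 4 ∂_w ∂_w̄`) at every point of the disk where
`|f(w)| < 1` and `f'(w) ≠ 0`. -/
theorem liouville_equation (f : ℂ → ℂ)
    (hf : DifferentiableOn ℂ f (Metric.ball 0 1))
    (ρ : ℂ → ℝ)
    (hρ : ∀ w : ℂ, ρ w =
      -Real.log ((1 - ‖f w‖ ^ 2) / 2) +
        (1 / 2) * Real.log (‖deriv f w‖ ^ 2))
    (w : ℂ) (hw : ‖w‖ < 1)
    (hfw : ‖f w‖ < 1) (hfd : deriv f w ≠ 0) :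
    iteratedDeriv 2 (fun x : ℝ => ρ ((x : ℂ) + w.im * Complex.I)) w.re +
      iteratedDeriv 2 (fun y : ℝ => ρ ((w.re : ℂ) + (y : ℂ) * Complex.I)) w.im =
    Real.exp (2 * ρ w) := by
  have hball : IsOpen (Metric.ball (0:ℂ) 1) := Metric.isOpen_ball
  have han : AnalyticOnNhd ℂ f (Metric.ball 0 1) := hf.analyticOnNhd hball
  have han1 : AnalyticOnNhd ℂ (deriv f) (Metric.ball 0 1) := han.deriv
  have han2 : AnalyticOnNhd ℂ (deriv (deriv f)) (Metric.ball 0 1) := han1.deriv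
  set U : Set ℂ := {z | z ∈ Metric.ball (0:ℂ) 1 ∧ Complex.normSq (f z) < 1 ∧ deriv f z ≠ 0}
    with hUdef
  have hUopen : IsOpen U := by
    rw [isOpen_iff_mem_nhds]
    intro z hz
    obtain ⟨hz1, hz2, hz3⟩ := hz
    have hcf : ContinuousAt f z := (han z hz1).differentiableAt.continuousAt
    have hcf1 : ContinuousAt (deriv f) z := (han1 z hz1).differentiableAt.continuousAt
    have e1 : ∀ᶠ y in nhds z, y ∈ Metric.ball (0:ℂ) 1 := hball.mem_nhds hz1
    have e2 : ∀ᶠ y in nhds z, Complex.normSq (f y) < 1 :=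
      Filter.Tendsto.eventually_lt_const hz2
        (Complex.continuous_normSq.continuousAt.comp hcf)
    have e3 : ∀ᶠ y in nhds z, deriv f y ≠ 0 := hcf1.eventually_ne hz3
    filter_upwards [e1, e2, e3] with y h1 h2 h3
    exact ⟨h1, h2, h3⟩
  have hwU : w ∈ U := by
    refine ⟨?_, ?_, hfd⟩
    · exact mem_ball_zero_iff.2 hw
    · rw [← Complex.sq_norm]
      nlinarith [norm_nonneg (f w)]
  have hd0 : ∀ z ∈ U, HasDerivAt f (deriv f z) z :=
    fun z hz => (han z hz.1).differentiableAt.hasDerivAt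
  have hd1 : ∀ z ∈ U, HasDerivAt (deriv f) (deriv (deriv f) z) z :=
    fun z hz => (han1 z hz.1).differentiableAt.hasDerivAt
  have hd2 : ∀ z ∈ U, HasDerivAt (deriv (deriv f)) (deriv (deriv (deriv f)) z) z :=
    fun z hz => (han2 z hz.1).differentiableAt.hasDerivAt
  have hA : ∀ z ∈ U, Complex.normSq (f z) < 1 := fun z hz => hz.2.1
  have hB : ∀ z ∈ U, deriv f z ≠ 0 := fun z hz => hz.2.2
  -- lines
  have hL1 : ∀ t : ℝ, HasDerivAt (fun x : ℝ => (x : ℂ) + (w.im : ℂ) * I) (1 : ℂ) t := by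
    intro t
    have := (Complex.ofRealCLM.hasDerivAt (x := t)).add_const ((w.im : ℂ) * I)
    simpa using this
  have hL2 : ∀ t : ℝ, HasDerivAt (fun y : ℝ => (w.re : ℂ) + (y : ℂ) * I) (I : ℂ) t := by
    intro t
    have := ((Complex.ofRealCLM.hasDerivAt (x := t)).mul_const I).const_add ((w.re : ℂ))
    simpa using this
  have hw1 : ((w.re : ℂ) + (w.im : ℂ) * I) = w := re_add_im w
  have E1 := line_second f (deriv f) (deriv (deriv f)) (deriv (deriv (deriv f))) U hUopen
    hd0 hd1 hd2 hA hB (fun x : ℝ => (x : ℂ) + (w.im : ℂ) * I) 1 hL1 w.re (by simpa only [re_add_im] using hwU)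
  have E2 := line_second f (deriv f) (deriv (deriv f)) (deriv (deriv (deriv f))) U hUopen
    hd0 hd1 hd2 hA hB (fun y : ℝ => (w.re : ℂ) + (y : ℂ) * I) I hL2 w.im (by simpa only [re_add_im] using hwU)
  simp only [re_add_im] at E1 E2
  -- rewrite the goal's functions
  have hfun1 : (fun x : ℝ => ρ ((x : ℂ) + w.im * Complex.I))
      = fun t : ℝ => -Real.log ((1 - Complex.normSq (f ((t : ℂ) + (w.im : ℂ) * I))) / 2)
        + (1/2) * Real.log (Complex.normSq (deriv f ((t : ℂ) + (w.im : ℂ) * I))) := by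
    funext t; rw [hρ, Complex.sq_norm, Complex.sq_norm]
  have hfun2 : (fun y : ℝ => ρ ((w.re : ℂ) + (y : ℂ) * Complex.I))
      = fun t : ℝ => -Real.log ((1 - Complex.normSq (f ((w.re : ℂ) + (t : ℂ) * I))) / 2)
        + (1/2) * Real.log (Complex.normSq (deriv f ((w.re : ℂ) + (t : ℂ) * I))) := by
    funext t; rw [hρ, Complex.sq_norm, Complex.sq_norm]
  rw [hfun1, hfun2, E1, E2]
  -- rewrite RHS exponential
  have hApos : (0:ℝ) < 1 - Complex.normSq (f w) := by linarith [hwU.2.1]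
  have hBpos : (0:ℝ) < Complex.normSq (deriv f w) := Complex.normSq_pos.2 hfd
  have hupos : (0:ℝ) < (1 - Complex.normSq (f w)) / 2 := by linarith
  have hexp : Real.exp (2 * ρ w)
      = Complex.normSq (deriv f w) /
        (((1 - Complex.normSq (f w)) / 2) * ((1 - Complex.normSq (f w)) / 2)) := by
    rw [hρ w, Complex.sq_norm, Complex.sq_norm]
    have harg : 2 * (-Real.log ((1 - Complex.normSq (f w)) / 2)
        + 1 / 2 * Real.log (Complex.normSq (deriv f w)))
        = Real.log (Complex.normSq (deriv f w))
          - (Real.log ((1 - Complex.normSq (f w)) / 2)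
            + Real.log ((1 - Complex.normSq (f w)) / 2)) := by ring
    rw [harg, Real.exp_sub, Real.exp_add, Real.exp_log hBpos, Real.exp_log hupos]
  rw [hexp]
  -- final algebra
  set a : ℂ := f w
  set b : ℂ := deriv f w
  set c : ℂ := deriv (deriv f) w
  set e : ℂ := deriv (deriv (deriv f)) w
  have hAne : (1 : ℝ) - Complex.normSq a ≠ 0 := ne_of_gt hApos
  have hBne : Complex.normSq b ≠ 0 := ne_of_gt hBpos
  simp only [one_pow, one_mul, Complex.I_sq, neg_one_mul, Complex.neg_re, Complex.neg_im,
    Complex.mul_re, Complex.mul_im, Complex.I_re, Complex.I_im, Complex.normSq_apply]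
  field_simp
  ring
end

section
/- For c ∈ ℝ, c ≠ 0, the function Ξ(w) = 2(1 - |w|^{2c})/|1 - w^c|² on a simply connected subdomain of the punctured unit disk (avoiding the branch cut and zeros of 1 - w^c) satisfies ∂_w ∂_{w̄} Ξ = 0, i.e., Ξ is harmonic. -/
open Complex

/-- Horizontal slice derivative of the real part of a holomorphic function. -/
private lemma slice_h {F : ℂ → ℂ} {d : ℂ} {a b : ℝ}
    (hF : HasDerivAt F d ((a : ℂ) + (b : ℂ) * Complex.I)) :
    HasDerivAt (fun x : ℝ => (F ((x : ℂ) + (b : ℂ) * Complex.I)).re) d.re a := by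
  have hin : HasDerivAt (fun v : ℂ => v + (b : ℂ) * Complex.I) 1 (a : ℂ) :=
    (hasDerivAt_id _).add_const _
  have hG : HasDerivAt (fun v : ℂ => F (v + (b : ℂ) * Complex.I)) d (a : ℂ) := by
    have := hF.comp (a : ℂ) hin
    rw [mul_one] at this
    exact this
  exact hG.real_of_complex

/-- Vertical slice derivative of the real part of a holomorphic function. -/
private lemma slice_v {F : ℂ → ℂ} {d : ℂ} {a b : ℝ}
    (hF : HasDerivAt F d ((a : ℂ) + (b : ℂ) * Complex.I)) :
    HasDerivAt (fun y : ℝ => (F ((a : ℂ) + (y : ℂ) * Complex.I)).re) (d * Complex.I).re b := by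
  have hin : HasDerivAt (fun v : ℂ => (a : ℂ) + v * Complex.I) Complex.I (b : ℂ) := by
    simpa using ((hasDerivAt_id ((b : ℂ))).mul_const Complex.I).const_add (a : ℂ)
  have hG : HasDerivAt (fun v : ℂ => F ((a : ℂ) + v * Complex.I)) (d * Complex.I) (b : ℂ) :=
    hF.comp (b : ℂ) hin
  exact hG.real_of_complex

/-- For `c ∈ ℝ`, `c ≠ 0`, the superpotential `Ξ(w) = 2(1 - |w|^{2c})/|1 - w^c|²`
(with `w^c = exp(c log w)` for a branch of the logarithm) is harmonic, i.e.
`Δ Ξ = 4 ∂_w ∂_w̄ Ξ = 0`, at every point of the punctured unit disk away from the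
branch cut and the zeros of `1 - w^c`. -/
theorem singular_superpotential_harmonic (c : ℝ) (hc : c ≠ 0)
    (w : ℂ) (hw0 : w ≠ 0) (hw1 : ‖w‖ < 1)
    (hslit : w ∈ Complex.slitPlane)
    (hzero : Complex.exp ((c : ℂ) * Complex.log w) ≠ 1) :
    let Ξ : ℂ → ℝ := fun v =>
      2 * (1 - ‖v‖ ^ (2 * c)) /
        ‖1 - Complex.exp ((c : ℂ) * Complex.log v)‖ ^ 2
    iteratedDeriv 2 (fun x : ℝ => Ξ ((x : ℂ) + w.im * Complex.I)) w.re +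
      iteratedDeriv 2 (fun y : ℝ => Ξ ((w.re : ℂ) + (y : ℂ) * Complex.I)) w.im = 0 := by
  intro Ξ
  set e : ℂ → ℂ := fun v => Complex.exp ((c : ℂ) * Complex.log v) with he
  set F : ℂ → ℂ := fun v => 2 * (1 + e v) / (1 - e v) with hFdef
  set U : Set ℂ := Complex.slitPlane ∩ (e ⁻¹' {(1 : ℂ)}ᶜ) with hUdef
  -- U is open
  have heCont : ContinuousOn e Complex.slitPlane := by
    apply ContinuousOn.cexp
    exact continuousOn_const.mul (fun z hz => (continuousAt_clog hz).continuousWithinAt)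
  have hUopen : IsOpen U :=
    heCont.isOpen_inter_preimage Complex.isOpen_slitPlane isOpen_compl_singleton
  have hwU : w ∈ U := ⟨hslit, hzero⟩
  -- F is differentiable on U
  have hediff : ∀ v ∈ U, DifferentiableAt ℂ e v := fun v hv => by
    exact ((Complex.differentiableAt_log hv.1).const_mul _).cexp
  have hne : ∀ v ∈ U, 1 - e v ≠ 0 := fun v hv => sub_ne_zero.mpr (Ne.symm hv.2)
  have hFdiff : ∀ v ∈ U, DifferentiableAt ℂ F v := fun v hv =>
    (((hediff v hv).const_add 1).const_mul 2).div ((hediff v hv).const_sub 1) (hne v hv)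
  -- F and its derivative are analytic on U
  have hFdOn : DifferentiableOn ℂ F U := fun v hv => (hFdiff v hv).differentiableWithinAt
  have hFan : AnalyticOnNhd ℂ F U := hFdOn.analyticOnNhd hUopen
  have hF'an : AnalyticOnNhd ℂ (deriv F) U := hFan.deriv
  have hF'diff : ∀ v ∈ U, DifferentiableAt ℂ (deriv F) v := fun v hv =>
    (hF'an v hv).differentiableAt
  -- On U, Ξ agrees with the real part of F
  have hEq : ∀ v ∈ U, Ξ v = (F v).re := by
    intro v hv
    have hv0 : v ≠ 0 := Complex.slitPlane_ne_zero hv.1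
    have habs : (0 : ℝ) < ‖v‖ := norm_pos_iff.mpr hv0
    have hz2 : Complex.normSq (e v) = ‖v‖ ^ (2 * c) := by
      have h1 : ‖e v‖ = Real.exp (c * Real.log ‖v‖) := by
        rw [he]
        rw [Complex.norm_exp]
        congr 1
        simp [Complex.log_re, Complex.mul_re]
      rw [Complex.normSq_eq_norm_sq, h1, Real.rpow_def_of_pos habs, sq, ← Real.exp_add]
      ring_nf
    have hden := hne v hv
    simp only [Ξ, hFdef]
    rw [Complex.div_re]
    have hnum : (2 * (1 + e v)).re * (1 - e v).re + (2 * (1 + e v)).im * (1 - e v).im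
        = 2 * (1 - Complex.normSq (e v)) := by
      simp [Complex.normSq_apply]
      ring
    rw [← add_div, hnum, hz2, Complex.normSq_eq_norm_sq]
  -- abbreviations
  obtain ⟨a, b⟩ := w
  set z : ℂ := ⟨a, b⟩ with hz
  have hzab : (a : ℂ) + (b : ℂ) * Complex.I = z := by
    apply Complex.ext <;> simp <;> rfl
  -- horizontal slice
  have hmemH : ∀ᶠ x : ℝ in nhds a, ((x : ℂ) + (b : ℂ) * Complex.I) ∈ U := by
    have : ContinuousAt (fun x : ℝ => (x : ℂ) + (b : ℂ) * Complex.I) a :=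
      (Complex.continuous_ofReal.continuousAt).add continuousAt_const
    have := this.preimage_mem_nhds (hUopen.mem_nhds (by rwa [hzab]))
    exact this
  have hmemV : ∀ᶠ y : ℝ in nhds b, ((a : ℂ) + (y : ℂ) * Complex.I) ∈ U := by
    have : ContinuousAt (fun y : ℝ => (a : ℂ) + (y : ℂ) * Complex.I) b :=
      continuousAt_const.add ((Complex.continuous_ofReal.continuousAt).mul continuousAt_const)
    exact this.preimage_mem_nhds (hUopen.mem_nhds (by rwa [hzab]))
  -- first: Ξ-slices agree with Re F slices eventually
  have hEqH : (fun x : ℝ => Ξ ((x : ℂ) + (b : ℂ) * Complex.I)) =ᶠ[nhds a]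
      (fun x : ℝ => (F ((x : ℂ) + (b : ℂ) * Complex.I)).re) :=
    hmemH.mono fun x hx => hEq _ hx
  have hEqV : (fun y : ℝ => Ξ ((a : ℂ) + (y : ℂ) * Complex.I)) =ᶠ[nhds b]
      (fun y : ℝ => (F ((a : ℂ) + (y : ℂ) * Complex.I)).re) :=
    hmemV.mono fun y hy => hEq _ hy
  -- derivatives of the Re F slices
  have hDH : ∀ᶠ x : ℝ in nhds a,
      deriv (fun x : ℝ => (F ((x : ℂ) + (b : ℂ) * Complex.I)).re) x
        = (deriv F ((x : ℂ) + (b : ℂ) * Complex.I)).re :=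
    hmemH.mono fun x hx =>
      (slice_h ((hFdiff _ hx).hasDerivAt)).deriv
  have hDV : ∀ᶠ y : ℝ in nhds b,
      deriv (fun y : ℝ => (F ((a : ℂ) + (y : ℂ) * Complex.I)).re) y
        = (deriv F ((a : ℂ) + (y : ℂ) * Complex.I) * Complex.I).re :=
    hmemV.mono fun y hy =>
      (slice_v ((hFdiff _ hy).hasDerivAt)).deriv
  -- second derivatives
  have hzU : ((a : ℂ) + (b : ℂ) * Complex.I) ∈ U := by rwa [hzab]
  have h2H : deriv (deriv (fun x : ℝ => Ξ ((x : ℂ) + (b : ℂ) * Complex.I))) a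
      = (deriv (deriv F) z).re := by
    have e1 : deriv (fun x : ℝ => Ξ ((x : ℂ) + (b : ℂ) * Complex.I)) =ᶠ[nhds a]
        (fun x : ℝ => (deriv F ((x : ℂ) + (b : ℂ) * Complex.I)).re) :=
      hEqH.deriv.trans hDH
    rw [e1.deriv_eq]
    rw [← hzab]
    exact (slice_h ((hF'diff _ hzU).hasDerivAt)).deriv
  have h2V : deriv (deriv (fun y : ℝ => Ξ ((a : ℂ) + (y : ℂ) * Complex.I))) b
      = (deriv (deriv F) z * Complex.I * Complex.I).re := by
    have e1 : deriv (fun y : ℝ => Ξ ((a : ℂ) + (y : ℂ) * Complex.I)) =ᶠ[nhds b]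
        (fun y : ℝ => ((fun v => deriv F v * Complex.I) ((a : ℂ) + (y : ℂ) * Complex.I)).re) :=
      hEqV.deriv.trans hDV
    rw [e1.deriv_eq]
    rw [← hzab]
    exact (slice_v (((hF'diff _ hzU).hasDerivAt).mul_const Complex.I)).deriv
  have hre : (z.re : ℝ) = a := rfl
  have him : (z.im : ℝ) = b := rfl
  show iteratedDeriv 2 (fun x : ℝ => Ξ ((x : ℂ) + (b : ℂ) * Complex.I)) a +
      iteratedDeriv 2 (fun y : ℝ => Ξ ((a : ℂ) + (y : ℂ) * Complex.I)) b = 0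
  rw [iteratedDeriv_succ, iteratedDeriv_one, iteratedDeriv_succ, iteratedDeriv_one, h2H, h2V]
  simp [Complex.mul_re]
end
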